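/- Let w ∈ W have an Ṡ_n-admissible presentation w = τ_{k_1}^{i_{k_1}}·τ_{k_2}^{i_{k_2}}⋯τ_{k_m}^{i_{k_m}}. For each 1 ≤ j ≤ m define i'_{k_j} = i_{k_j} if i_{k_j} ≥ 0, and i'_{k_j} = k_j + i_{k_j} if i_{k_j} < 0. Then w = t_{k_1}^{i'_{k_1}}·t_{k_2}^{i'_{k_2}}⋯t_{k_m}^{i'_{k_m}} in W. -/
import Mathlib


/-- The Coxeter matrix of type `Bₙ`, with the bond of order `4` between the
generators of indices `0` and `1` (the paper's convention): `s_i² = 1`,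
`(s_0·s_1)⁴ = 1`, `(s_i·s_{i+1})³ = 1` for `1 ≤ i ≤ n-2`, and `(s_i·s_j)² = 1`
for `|i-j| ≥ 2`. -/
def BCoxeterMatrix (n : ℕ) : CoxeterMatrix (Fin n) where
  M := Matrix.of fun i j : Fin n ↦
    if i = j then 1
      else if ((i : ℕ) = 0 ∧ (j : ℕ) = 1) ∨ ((j : ℕ) = 0 ∧ (i : ℕ) = 1) then 4
      else if (j : ℕ) + 1 = i ∨ (i : ℕ) + 1 = j then 3 else 2
  isSymm := by unfold Matrix.IsSymm; aesop
  diagonal := by simp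
  off_diagonal := by aesop

variable {n : ℕ} {W : Type*} [Group W]

/-- The simple reflection `s_j` of the Coxeter system, for `0 ≤ j ≤ n-1`
(junk value `1` for `j ≥ n`). -/
def sgen (cs : CoxeterSystem (BCoxeterMatrix n) W) (j : ℕ) : W :=
  if h : j < n then cs.simple ⟨j, h⟩ else 1

/-- `tau cs k` is the element `τ_k = s_0 · s_1 ⋯ s_{k-1}` (with `τ_0 = 1`). -/
def tau (cs : CoxeterSystem (BCoxeterMatrix n) W) (k : ℕ) : W :=
  ((List.range k).map (sgen cs)).prod

/-- An `Ṡ_n`-admissible presentation of `w ∈ W`: an expression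
`w = τ_{k_1}^{i_{k_1}} ⋯ τ_{k_m}^{i_{k_m}}` with `1 ≤ k_1 < ⋯ < k_m ≤ n` and
nonzero integers `i_{k_j}` such that `-k_j ≤ i_{k_j} ≤ k_j - 1` for all `j`,
`Σ_{j=1}^m i_{k_j} = 0`, and `0 ≤ Σ_{j=r}^m i_{k_j} ≤ k_{r-1}` for all `2 ≤ r ≤ m`. -/
structure IsAdmissible (cs : CoxeterSystem (BCoxeterMatrix n) W) (w : W)
    (m : ℕ) (k : Fin m → ℕ) (i : Fin m → ℤ) : Prop where
  one_le : ∀ j, 1 ≤ k j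
  le_n : ∀ j, k j ≤ n
  mono : StrictMono k
  ne_zero : ∀ j, i j ≠ 0
  lb : ∀ j, -(k j : ℤ) ≤ i j
  ub : ∀ j, i j ≤ (k j : ℤ) - 1
  total : ∑ j, i j = 0
  partialSum : ∀ r : ℕ, 1 ≤ r → ∀ hr : r < m,
    0 ≤ (∑ j ∈ Finset.univ.filter (fun j : Fin m => r ≤ (j : ℕ)), i j) ∧
    (∑ j ∈ Finset.univ.filter (fun j : Fin m => r ≤ (j : ℕ)), i j) ≤
      (k ⟨r - 1, Nat.lt_of_le_of_lt (Nat.sub_le r 1) hr⟩ : ℤ)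
  prod_eq : w = ((List.finRange m).map (fun j => tau cs (k j) ^ i j)).prod

/-- `tgen cs k` is the element `t_k = s_1 · s_2 ⋯ s_{k-1}`. -/
def tgen (cs : CoxeterSystem (BCoxeterMatrix n) W) (k : ℕ) : W :=
  ((List.range (k - 1)).map (fun j => sgen cs (j + 1))).prod

namespace AdmAux

lemma inv_of_invol {a : W} (ha : a * a = 1) : a⁻¹ = a := inv_eq_of_mul_eq_one_right ha

lemma comm_of_sq {a b : W} (ha : a * a = 1) (hb : b * b = 1)
    (hab : (a * b) ^ 2 = 1) : a * b = b * a := by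
  have h1 : (a * b) * (a * b) = 1 := by rw [← sq]; exact hab
  have h2 : (a * b)⁻¹ = a * b := inv_of_invol h1
  rw [← h2, mul_inv_rev, inv_of_invol ha, inv_of_invol hb]

lemma braid_of_cube {a b : W} (ha : a * a = 1) (hb : b * b = 1)
    (hab : (a * b) ^ 3 = 1) : a * b * a = b * a * b := by
  have E2 : (a * (b * a)) * (b * (a * b)) = 1 := by
    have h := hab
    rw [pow_succ, pow_succ, pow_one] at h
    calc (a * (b * a)) * (b * (a * b)) = a * b * (a * b) * (a * b) := by
          simp [mul_assoc]
      _ = 1 := h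
  have h3 := eq_inv_of_mul_eq_one_right E2
  rw [mul_inv_rev, mul_inv_rev, inv_of_invol ha, inv_of_invol hb] at h3
  simp only [mul_assoc] at h3 ⊢
  exact h3.symm

variable (cs : CoxeterSystem (BCoxeterMatrix n) W)

lemma s_mul_self (j : ℕ) : sgen cs j * sgen cs j = 1 := by
  unfold sgen; split
  · exact cs.simple_mul_simple_self _
  · simp

lemma s_eq (j : ℕ) (h : j < n) : sgen cs j = cs.simple ⟨j, h⟩ := by
  unfold sgen; rw [dif_pos]

lemma s_junk (j : ℕ) (h : ¬ j < n) : sgen cs j = 1 := by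
  unfold sgen; rw [dif_neg h]

lemma s_comm {j l : ℕ} (h : j + 2 ≤ l) : sgen cs j * sgen cs l = sgen cs l * sgen cs j := by
  by_cases hl : l < n
  · have hj : j < n := by omega
    have hM : (BCoxeterMatrix n).M ⟨j, hj⟩ ⟨l, hl⟩ = 2 := by
      simp only [BCoxeterMatrix, Matrix.of_apply]
      rw [if_neg, if_neg, if_neg] <;> simp [Fin.ext_iff] <;> omega
    have hp := cs.simple_mul_simple_pow ⟨j, hj⟩ ⟨l, hl⟩
    rw [hM] at hp
    rw [s_eq cs j hj, s_eq cs l hl]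
    exact comm_of_sq (cs.simple_mul_simple_self _) (cs.simple_mul_simple_self _) hp
  · simp [s_junk cs l hl]

lemma s_braid {j : ℕ} (h1 : 1 ≤ j) (h2 : j + 1 < n) :
    sgen cs j * sgen cs (j+1) * sgen cs j = sgen cs (j+1) * sgen cs j * sgen cs (j+1) := by
  have hj : j < n := by omega
  have hM : (BCoxeterMatrix n).M ⟨j, hj⟩ ⟨j+1, h2⟩ = 3 := by
    simp only [BCoxeterMatrix, Matrix.of_apply]
    rw [if_neg, if_neg, if_pos] <;> simp [Fin.ext_iff] <;> omega
  have hp := cs.simple_mul_simple_pow ⟨j, hj⟩ ⟨j+1, h2⟩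
  rw [hM] at hp
  rw [s_eq cs j hj, s_eq cs (j+1) h2]
  exact braid_of_cube (cs.simple_mul_simple_self _) (cs.simple_mul_simple_self _) hp


variable (cs : CoxeterSystem (BCoxeterMatrix n) W)

/-- `vv cs m` is the sign change on coordinate `m+1`, i.e. `u_{m+1} = s_m ⋯ s_1 s_0 s_1 ⋯ s_m`. -/
def vv : ℕ → W
  | 0 => sgen cs 0
  | (m+1) => sgen cs (m+1) * vv m * sgen cs (m+1)

/-- `dd cs S` is the sign change on the first `S` coordinates. -/
def dd (S : ℕ) : W := ((List.range S).map (vv cs)).prod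

lemma s_mul_v (m : ℕ) : sgen cs (m+1) * vv cs m = vv cs (m+1) * sgen cs (m+1) := by
  show _ = sgen cs (m+1) * vv cs m * sgen cs (m+1) * sgen cs (m+1)
  rw [mul_assoc, s_mul_self, mul_one]

lemma v_comm_hi {m l : ℕ} (h : m + 2 ≤ l) : Commute (sgen cs l) (vv cs m) := by
  induction m with
  | zero => exact (s_comm cs (show 0 + 2 ≤ l by omega)).symm
  | succ m ih =>
      have c1 : Commute (sgen cs l) (sgen cs (m+1)) :=
        (s_comm cs (show (m+1) + 2 ≤ l by omega)).symm
      exact (c1.mul_right (ih (by omega))).mul_right c1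

lemma v_comm_lo {l m : ℕ} (h1 : 1 ≤ l) (h2 : l < m) (hn : m < n) :
    Commute (sgen cs l) (vv cs m) := by
  induction m with
  | zero => omega
  | succ m ih =>
      by_cases hlm : l < m
      · have c1 : Commute (sgen cs l) (sgen cs (m+1)) :=
          s_comm cs (show l + 2 ≤ m + 1 by omega)
        exact (c1.mul_right (ih hlm (by omega))).mul_right c1
      · -- l = m, so m ≥ 1; write m = p+1
        have hl : l = m := by omega
        subst hl
        obtain ⟨p, rfl⟩ : ∃ p, l = p + 1 := ⟨l - 1, by omega⟩
        show Commute (sgen cs (p+1)) (vv cs (p+2))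
        set a := sgen cs (p+1) with ha'
        set b := sgen cs (p+2) with hb'
        set x := vv cs p with hx'
        have hbr : a * b * a = b * a * b := s_braid cs (by omega) (by omega)
        have hx : Commute b x := v_comm_hi cs (by omega)
        show a * (b * (a * x * a) * b) = (b * (a * x * a) * b) * a
        calc a * (b * (a * x * a) * b) = (a * b * a) * (x * (a * b)) := by
              simp only [mul_assoc]
          _ = (b * a * b) * (x * (a * b)) := by rw [hbr]
          _ = (b * a) * (b * x) * (a * b) := by simp only [mul_assoc]
          _ = (b * a) * (x * b) * (a * b) := by rw [hx.eq]
          _ = (b * (a * x)) * (b * a * b) := by simp only [mul_assoc]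
          _ = (b * (a * x)) * (a * b * a) := by rw [← hbr]
          _ = (b * (a * x * a) * b) * a := by simp only [mul_assoc]

lemma t_succ (p : ℕ) : tgen cs (p+2) = tgen cs (p+1) * sgen cs (p+1) := by
  unfold tgen
  simp [List.range_succ]

lemma t_one : tgen cs 1 = 1 := by simp [tgen]

lemma t_zero : tgen cs 0 = 1 := by simp [tgen]

lemma s_comm_t {g : W} {j : ℕ} (h : ∀ l, 1 ≤ l → l ≤ j - 1 → Commute g (sgen cs l)) :
    Commute g (tgen cs j) := by
  apply Commute.list_prod_right
  intro x hx
  simp only [List.mem_map, List.mem_range] at hx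
  obtain ⟨l, hl, rfl⟩ := hx
  exact h (l+1) (by omega) (by omega)

lemma t_conj_s {j k : ℕ} (h1 : 1 ≤ j) (h2 : j + 2 ≤ k) (hk : k ≤ n) :
    tgen cs k * sgen cs j = sgen cs (j+1) * tgen cs k := by
  induction k with
  | zero => omega
  | succ k ih =>
      by_cases hjk : j + 2 ≤ k
      · -- step case
        obtain ⟨p, rfl⟩ : ∃ p, k = p + 1 := ⟨k - 1, by omega⟩
        rw [t_succ]
        have c1 : Commute (sgen cs (p+1)) (sgen cs j) :=
          (s_comm cs (show j + 2 ≤ p + 1 by omega)).symm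
        rw [mul_assoc, c1.eq, ← mul_assoc, ih hjk (by omega), mul_assoc]
      · -- base case : k + 1 = j + 2
        have hk2 : k = j + 1 := by omega
        subst hk2
        rw [t_succ]
        obtain ⟨p, rfl⟩ : ∃ p, j = p + 1 := ⟨j - 1, by omega⟩
        rw [t_succ]
        set a := sgen cs (p+1) with ha'
        set b := sgen cs (p+2) with hb'
        set T := tgen cs (p+1) with hT'
        have hbr : a * b * a = b * a * b := s_braid cs (by omega) (by omega)
        have hTb : Commute b T := by
          apply s_comm_t
          intro l hl1 hl2
          exact (s_comm cs (show l + 2 ≤ p + 2 by omega)).symm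
        calc T * a * b * a = T * (a * b * a) := by simp only [mul_assoc]
          _ = T * (b * a * b) := by rw [hbr]
          _ = (T * b) * (a * b) := by simp only [mul_assoc]
          _ = (b * T) * (a * b) := by rw [← hTb.eq]
          _ = b * (T * a * b) := by simp only [mul_assoc]

lemma t_conj_v {m k : ℕ} (h : m + 2 ≤ k) (hk : k ≤ n) :
    tgen cs k * vv cs m = vv cs (m+1) * tgen cs k := by
  induction k with
  | zero => omega
  | succ k ih =>
      by_cases hmk : m + 2 ≤ k
      · obtain ⟨p, rfl⟩ : ∃ p, k = p + 1 := ⟨k - 1, by omega⟩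
        rw [t_succ]
        have c1 : Commute (sgen cs (p+1)) (vv cs m) := v_comm_hi cs (by omega)
        rw [mul_assoc, c1.eq, ← mul_assoc, ih hmk (by omega), mul_assoc]
      · have hk2 : k = m + 1 := by omega
        subst hk2
        rw [t_succ]
        have hc : Commute (vv cs (m+1)) (tgen cs (m+1)) := by
          apply s_comm_t
          intro l hl1 hl2
          exact (v_comm_lo cs hl1 (by omega) (by omega)).symm
        rw [mul_assoc, s_mul_v, ← mul_assoc, ← hc.eq, mul_assoc]

lemma tau_eq (k : ℕ) : tau cs (k+1) = sgen cs 0 * tgen cs (k+1) := by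
  unfold tau tgen
  rw [List.range_succ_eq_map]
  simp [List.map_map, Function.comp_def]

lemma dd_zero : dd cs 0 = 1 := by simp [dd]

lemma dd_succ (S : ℕ) : dd cs (S+1) = dd cs S * vv cs S := by
  simp [dd, List.range_succ]

lemma dd_succ' (S : ℕ) :
    dd cs (S+1) = sgen cs 0 * ((List.range S).map (fun m => vv cs (m+1))).prod := by
  rw [dd, List.range_succ_eq_map]
  simp only [List.map_cons, List.map_map, List.prod_cons]
  rfl

lemma t_mul_d {S k : ℕ} (h : S + 1 ≤ k) (hk : k ≤ n) :
    tgen cs k * dd cs S = ((List.range S).map (fun m => vv cs (m+1))).prod * tgen cs k := by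
  induction S with
  | zero => simp [dd_zero]
  | succ S ih =>
      rw [dd_succ, List.range_succ]
      simp only [List.map_append, List.prod_append, List.map_cons, List.map_nil,
        List.prod_cons, List.prod_nil, mul_one]
      calc tgen cs k * (dd cs S * vv cs S)
          = (tgen cs k * dd cs S) * vv cs S := by simp only [mul_assoc]
        _ = ((List.range S).map (fun m => vv cs (m+1))).prod * (tgen cs k * vv cs S) := by
            rw [ih (by omega)]; simp only [mul_assoc]
        _ = ((List.range S).map (fun m => vv cs (m+1))).prod * (vv cs (S+1) * tgen cs k) := by
            rw [t_conj_v cs (by omega) hk]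
        _ = ((List.range S).map (fun m => vv cs (m+1))).prod * vv cs (S+1) * tgen cs k := by
            simp only [mul_assoc]

lemma tau_mul_d {S k : ℕ} (h : S + 1 ≤ k) (hk : k ≤ n) :
    tau cs k * dd cs S = dd cs (S+1) * tgen cs k := by
  obtain ⟨p, rfl⟩ : ∃ p, k = p + 1 := ⟨k - 1, by omega⟩
  rw [tau_eq, dd_succ', mul_assoc, t_mul_d cs h hk, ← mul_assoc]

lemma tau_pow_d {k : ℕ} (hk : k ≤ n) : ∀ (a S : ℕ), S + a ≤ k →
    tau cs k ^ a * dd cs S = dd cs (S + a) * tgen cs k ^ a := by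
  intro a
  induction a with
  | zero => intro S _; simp
  | succ a ih =>
      intro S hS
      rw [pow_succ', mul_assoc, ih S (by omega)]
      rw [← mul_assoc, tau_mul_d cs (by omega) hk]
      rw [pow_succ', ← add_assoc]
      simp only [mul_assoc]

/-- ascending run `s_a s_{a+1} ⋯ s_{a+len-1}` -/
def asc (a len : ℕ) : W := ((List.range len).map (fun i => sgen cs (a + i))).prod

lemma asc_succ (a len : ℕ) : asc cs a (len+1) = asc cs a len * sgen cs (a+len) := by
  simp [asc, List.range_succ]

lemma t_asc (k : ℕ) : tgen cs k = asc cs 1 (k-1) := by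
  unfold tgen asc
  congr 1
  apply List.map_congr_left
  intro i _
  rw [Nat.add_comm]

lemma t_push {a len k : ℕ} (h1 : 1 ≤ a) (h2 : a + len + 1 ≤ k) (hk : k ≤ n) :
    tgen cs k * asc cs a len = asc cs (a+1) len * tgen cs k := by
  induction len with
  | zero => simp [asc]
  | succ len ih =>
      rw [asc_succ, ← mul_assoc, ih (by omega)]
      rw [mul_assoc, t_conj_s cs (by omega) (by omega) hk, asc_succ]
      have e : a + 1 + len = a + len + 1 := by omega
      rw [e]
      simp only [mul_assoc]

lemma t_mul_s (p : ℕ) : tgen cs (p+2) * sgen cs (p+1) = tgen cs (p+1) := by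
  rw [t_succ, mul_assoc, s_mul_self, mul_one]

lemma t_pow_block {k : ℕ} (hk : k ≤ n) : ∀ m, m + 2 ≤ k →
    tgen cs k ^ (m+1) = asc cs (m+1) (k-m-1) * tgen cs (k-1) ^ m := by
  intro m
  induction m with
  | zero =>
      intro h
      rw [pow_one, pow_zero, mul_one, t_asc]
      norm_num
  | succ m ih =>
      intro h
      obtain ⟨p, rfl⟩ : ∃ p, k = p + 2 := ⟨k - 2, by omega⟩
      have e1 : p + 2 - m - 1 = (p - m) + 1 := by omega
      have e5 : p + 2 - 1 = p + 1 := by omega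
      rw [pow_succ', ih (by omega), e1, e5]
      have e2 : (m + 1) + (p - m) = p + 1 := by omega
      rw [asc_succ, e2]
      have e3 : tgen cs (p+2) * asc cs (m+1) (p - m) = asc cs (m+2) (p - m) * tgen cs (p+2) := by
        apply t_push cs (by omega) (by omega) hk
      simp only [← mul_assoc]
      rw [e3, mul_assoc (asc cs (m+2) (p - m)), t_mul_s]
      have e4 : p + 2 - (m+1) - 1 = p - m := by omega
      rw [e4, mul_assoc, ← pow_succ']

def rho : ℕ → W
  | 0 => 1
  | 1 => 1
  | (p+2) => sgen cs (p+1) * rho (p+1)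

lemma t_pow_pred : ∀ k, k ≤ n → tgen cs k ^ (k-1) = rho cs k := by
  intro k
  induction k with
  | zero => intro _; simp [rho]
  | succ k ih =>
      match k, ih with
      | 0, _ => intro _; simp [rho, pow_zero]
      | (p+1), ih =>
          intro hk
          have h1 : p + 1 + 1 - 1 = p + 1 := by omega
          rw [h1, t_pow_block cs hk p (by omega)]
          have e1 : p + 2 - p - 1 = 1 := by omega
          rw [e1, asc_succ]
          have e2 : p + 2 - 1 = p + 1 := by omega
          have ihp := ih (by omega : p + 1 ≤ n)
          rw [show p + 1 - 1 = p from rfl] at ihp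
          rw [e2, ihp]
          show 1 * sgen cs (p + 1 + 0) * rho cs (p+1) = rho cs (p+2)
          rw [one_mul, Nat.add_zero]
          rfl

lemma t_mul_rho : ∀ k, tgen cs k * rho cs k = 1 := by
  intro k
  induction k with
  | zero => simp [rho, t_zero]
  | succ k ih =>
      match k, ih with
      | 0, _ => simp [rho, t_one]
      | (p+1), ih =>
          show tgen cs (p+2) * (sgen cs (p+1) * rho cs (p+1)) = 1
          rw [← mul_assoc, t_mul_s, ih]

lemma t_pow_self {k : ℕ} (hk : k ≤ n) : tgen cs k ^ k = 1 := by
  cases k with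
  | zero => simp
  | succ p =>
      rw [pow_succ']
      have h := t_pow_pred cs (p+1) hk
      rw [show p + 1 - 1 = p from rfl] at h
      rw [h, t_mul_rho]

lemma tau_pow_neg_d {k r S : ℕ} (hk : k ≤ n) (hr : r ≤ S) (hS : S ≤ k) :
    (tau cs k ^ r)⁻¹ * dd cs S = dd cs (S - r) * tgen cs k ^ (k - r) := by
  have h2 := tau_pow_d cs hk r (S - r) (by omega)
  have e : S - r + r = S := by omega
  rw [e] at h2
  have h4 : (tgen cs k ^ r)⁻¹ = tgen cs k ^ (k - r) := by
    have h5 : tgen cs k ^ (k - r) * tgen cs k ^ r = 1 := by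
      rw [← pow_add]
      have : k - r + r = k := by omega
      rw [this, t_pow_self cs hk]
    exact (eq_inv_of_mul_eq_one_left h5).symm
  have h6 : tau cs k ^ r * dd cs (S - r) * (tgen cs k ^ r)⁻¹ = dd cs S := by
    rw [h2, mul_inv_cancel_right]
  rw [← h6, h4]
  simp only [mul_assoc, inv_mul_cancel_left]
lemma step_lemma {K : ℕ} {I S' : ℤ} (hK1 : 1 ≤ K) (hK : K ≤ n) (h1 : 0 ≤ S') (h2 : S' ≤ (K:ℤ))
    (h3 : 0 ≤ S' + I) (h4 : S' + I ≤ (K:ℤ)) :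
    tau cs K ^ I * dd cs S'.toNat =
      dd cs (S' + I).toNat * tgen cs K ^ (if 0 ≤ I then I else (K : ℤ) + I) := by
  by_cases hI : 0 ≤ I
  · rw [if_pos hI]
    have e1 : tau cs K ^ I = tau cs K ^ I.toNat := by
      rw [← zpow_natCast, Int.toNat_of_nonneg hI]
    have e2 : tgen cs K ^ I = tgen cs K ^ I.toNat := by
      rw [← zpow_natCast, Int.toNat_of_nonneg hI]
    have e3 : (S' + I).toNat = S'.toNat + I.toNat := by omega
    rw [e1, e2, e3]
    exact tau_pow_d cs hK I.toNat S'.toNat (by omega)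
  · rw [if_neg hI]
    push_neg at hI
    set r : ℕ := (-I).toNat with hr
    have e1 : tau cs K ^ I = (tau cs K ^ r)⁻¹ := by
      have : I = -(r : ℤ) := by omega
      rw [this, zpow_neg, zpow_natCast]
    have e2 : tgen cs K ^ ((K:ℤ) + I) = tgen cs K ^ (K - r) := by
      have : (K:ℤ) + I = ((K - r : ℕ) : ℤ) := by omega
      rw [this, zpow_natCast]
    have e3 : (S' + I).toNat = S'.toNat - r := by omega
    rw [e1, e2, e3]
    exact tau_pow_neg_d cs hK (by omega) (by omega)

end AdmAux

/-- If `w = τ_{k_1}^{i_{k_1}} ⋯ τ_{k_m}^{i_{k_m}}` is an `Ṡ_n`-admissible presentation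
then `w = t_{k_1}^{i'_{k_1}} ⋯ t_{k_m}^{i'_{k_m}}`, where `i'_{k_j} = i_{k_j}` if
`i_{k_j} ≥ 0` and `i'_{k_j} = k_j + i_{k_j}` if `i_{k_j} < 0`. -/
theorem admissible_eq_t_prod (cs : CoxeterSystem (BCoxeterMatrix n) W) (w : W)
    (m : ℕ) (k : Fin m → ℕ) (i : Fin m → ℤ) (h : IsAdmissible cs w m k i) :
    w = ((List.finRange m).map (fun j =>
      tgen cs (k j) ^ (if 0 ≤ i j then i j else (k j : ℤ) + i j))).prod := by
  classical
  set Sr : ℕ → ℤ := fun r => ∑ j ∈ Finset.univ.filter (fun j : Fin m => r ≤ (j : ℕ)), i j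
    with hSrdef
  have hSr0 : Sr 0 = 0 := by
    have he : Finset.univ.filter (fun j : Fin m => 0 ≤ (j : ℕ)) = Finset.univ := by
      ext j; simp
    simp only [hSrdef, he]
    exact h.total
  have hSrm : ∀ r, m ≤ r → Sr r = 0 := by
    intro r hrm
    have he : Finset.univ.filter (fun j : Fin m => r ≤ (j : ℕ)) = ∅ := by
      ext j
      simp only [Finset.mem_filter, Finset.mem_univ, true_and, Finset.notMem_empty, iff_false]
      have := j.isLt
      omega
    simp [hSrdef, he]
  have hstep : ∀ r (hr : r < m), Sr r = i ⟨r, hr⟩ + Sr (r+1) := by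
    intro r hr
    have hins : Finset.univ.filter (fun j : Fin m => r ≤ (j : ℕ)) =
        insert ⟨r, hr⟩ (Finset.univ.filter (fun j : Fin m => r + 1 ≤ (j : ℕ))) := by
      ext j
      simp only [Finset.mem_filter, Finset.mem_univ, true_and, Finset.mem_insert, Fin.ext_iff]
      omega
    simp only [hSrdef]
    rw [hins, Finset.sum_insert (by simp)]
  have hlow : ∀ r, 0 ≤ Sr r := by
    intro r
    rcases Nat.eq_zero_or_pos r with h0 | h0
    · rw [h0, hSr0]
    · by_cases hrm : r < m
      · exact (h.partialSum r h0 hrm).1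
      · rw [hSrm r (by omega)]
  have main : ∀ d r, r + d = m →
      (((List.finRange m).drop r).map (fun j => tau cs (k j) ^ i j)).prod =
        AdmAux.dd cs (Sr r).toNat * (((List.finRange m).drop r).map (fun j =>
          tgen cs (k j) ^ (if 0 ≤ i j then i j else (k j : ℤ) + i j))).prod := by
    intro d
    induction d with
    | zero =>
        intro r hrm
        have he : (List.finRange m).drop r = [] := by
          apply List.drop_eq_nil_of_le
          simp
          omega
        rw [he, hSrm r (by omega)]
        simp [AdmAux.dd]
    | succ d ih =>
        intro r hrm
        have hr : r < m := by omega
        have hdrop : (List.finRange m).drop r = ⟨r, hr⟩ :: (List.finRange m).drop (r+1) := by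
          rw [List.drop_eq_getElem_cons (by simp [hr] : r < (List.finRange m).length)]
          simp
        rw [hdrop]
        simp only [List.map_cons, List.prod_cons]
        rw [ih (r+1) (by omega)]
        have hK1 : 1 ≤ k ⟨r, hr⟩ := h.one_le _
        have hK : k ⟨r, hr⟩ ≤ n := h.le_n _
        have hb1 : 0 ≤ Sr (r+1) := hlow _
        have hb2 : Sr (r+1) ≤ (k ⟨r, hr⟩ : ℤ) := by
          by_cases hrm1 : r + 1 < m
          · exact (h.partialSum (r+1) (by omega) hrm1).2
          · rw [hSrm (r+1) (by omega)]
            exact_mod_cast Int.ofNat_nonneg _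
        have hb3 : 0 ≤ Sr (r+1) + i ⟨r, hr⟩ := by
          rw [add_comm, ← hstep r hr]; exact hlow r
        have hb4 : Sr (r+1) + i ⟨r, hr⟩ ≤ (k ⟨r, hr⟩ : ℤ) := by
          rw [add_comm, ← hstep r hr]
          rcases Nat.eq_zero_or_pos r with h0 | h0
          · subst h0
            rw [hSr0]
            exact_mod_cast Int.ofNat_nonneg _
          · calc Sr r ≤ (k ⟨r-1, by omega⟩ : ℤ) := (h.partialSum r h0 hr).2
              _ ≤ (k ⟨r, hr⟩ : ℤ) := by
                have : k ⟨r-1, by omega⟩ ≤ k ⟨r, hr⟩ :=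
                  le_of_lt (h.mono (by rw [Fin.mk_lt_mk]; omega))
                exact_mod_cast this
        have key := AdmAux.step_lemma cs hK1 hK hb1 hb2 hb3 hb4
        have e : (Sr (r+1) + i ⟨r, hr⟩).toNat = (Sr r).toNat := by
          rw [add_comm, ← hstep r hr]
        rw [e] at key
        rw [← mul_assoc, key, mul_assoc]
  have h0 := main m 0 (by omega)
  rw [List.drop_zero, hSr0] at h0
  simp only [Int.toNat_zero] at h0
  rw [h.prod_eq, h0]
  have : AdmAux.dd cs 0 = 1 := by simp [AdmAux.dd]
  rw [this, one_mul]
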